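/- Let M be a quantum channel on d×d complex matrices with Kraus operators (K_i). Then for every d×d complex matrix X, ‖M(X)‖₁ ≤ ‖X‖₁. -/

import Mathlib

open Matrix
open scoped ComplexOrder

/-- The trace norm (Schatten 1-norm) of a complex square matrix: `‖A‖₁ = tr √(AᴴA)`. -/
noncomputable def traceNorm {m : Type*} [Fintype m] [DecidableEq m] (A : Matrix m m ℂ) : ℝ :=
  (((Matrix.posSemidef_conjTranspose_mul_self A).1.eigenvectorUnitary : Matrix m m ℂ) *
    diagonal (((↑) : ℝ → ℂ) ∘ (√·) ∘ (Matrix.posSemidef_conjTranspose_mul_self A).1.eigenvalues) *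
    (star (Matrix.posSemidef_conjTranspose_mul_self A).1.eigenvectorUnitary : Matrix m m ℂ)).trace.re

set_option linter.unusedSectionVars false

section SqrtAux

variable {n : Type*} [Fintype n] [DecidableEq n]

noncomputable def Matrix.PosSemidef.sqrt {A : Matrix n n ℂ} (hA : A.PosSemidef) : Matrix n n ℂ :=
  (hA.1.eigenvectorUnitary : Matrix n n ℂ) *
    diagonal (((↑) : ℝ → ℂ) ∘ (√·) ∘ hA.1.eigenvalues) *
    (star hA.1.eigenvectorUnitary : Matrix n n ℂ)

lemma spectral_aux {A : Matrix n n ℂ} (hA : A.IsHermitian) :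
    A = (hA.eigenvectorUnitary : Matrix n n ℂ) * diagonal (((↑) : ℝ → ℂ) ∘ hA.eigenvalues) *
      (star hA.eigenvectorUnitary : Matrix n n ℂ) := by
  conv_lhs => rw [hA.spectral_theorem, Unitary.conjStarAlgAut_apply]
  rfl

lemma Matrix.PosSemidef.posSemidef_sqrt {A : Matrix n n ℂ} (hA : A.PosSemidef) :
    hA.sqrt.PosSemidef := by
  unfold Matrix.PosSemidef.sqrt
  have h2 : (diagonal (((↑) : ℝ → ℂ) ∘ (√·) ∘ hA.1.eigenvalues)).PosSemidef := by
    refine posSemidef_diagonal_iff.mpr fun i => ?_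
    exact Complex.zero_le_real.mpr (Real.sqrt_nonneg _)
  have h3 := h2.mul_mul_conjTranspose_same (hA.1.eigenvectorUnitary : Matrix n n ℂ)
  rwa [← star_eq_conjTranspose] at h3

lemma Matrix.PosSemidef.sqrt_mul_self {A : Matrix n n ℂ} (hA : A.PosSemidef) :
    hA.sqrt * hA.sqrt = A := by
  have hVV : (star hA.1.eigenvectorUnitary : Matrix n n ℂ) *
      (hA.1.eigenvectorUnitary : Matrix n n ℂ) = 1 :=
    mem_unitaryGroup_iff'.mp hA.1.eigenvectorUnitary.2
  conv_rhs => rw [spectral_aux hA.1]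
  unfold Matrix.PosSemidef.sqrt
  have e : ∀ (V D E W : Matrix n n ℂ), V * D * W * (V * E * W) = V * (D * (W * V) * E) * W := by
    intro V D E W; simp only [Matrix.mul_assoc]
  rw [e, hVV, Matrix.mul_one, diagonal_mul_diagonal]
  refine congrArg (· * _) (congrArg (_ * ·) (congrArg diagonal (funext fun i => ?_)))
  simp only [Function.comp_apply]
  rw [← Complex.ofReal_mul, Real.mul_self_sqrt (hA.eigenvalues_nonneg i)]

end SqrtAux

namespace TraceNormAux

variable {n : Type*} [Fintype n] [DecidableEq n]

/-- View a vector as an element of Euclidean space. -/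
noncomputable abbrev toE (x : n → ℂ) : EuclideanSpace ℂ n := (WithLp.equiv 2 _).symm x

lemma dot_star_self_eq (x : n → ℂ) : star x ⬝ᵥ x = ((‖toE x‖ ^ 2 : ℝ) : ℂ) := by
  have h := inner_self_eq_norm_sq_to_K (𝕜 := ℂ) (toE x)
  rw [EuclideanSpace.inner_eq_star_dotProduct, dotProduct_comm] at h
  simpa using h

lemma abs_dot_le (y x : n → ℂ) : ‖star y ⬝ᵥ x‖ ≤ ‖toE y‖ * ‖toE x‖ := by
  have h := norm_inner_le_norm (𝕜 := ℂ) (toE y) (toE x)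
  rw [EuclideanSpace.inner_eq_star_dotProduct, dotProduct_comm] at h
  simpa using h

/-- `C` is a contraction. -/
def Con (C : Matrix n n ℂ) : Prop := (1 - Cᴴ * C).PosSemidef

lemma quad_sub (M : Matrix n n ℂ) (x : n → ℂ) :
    star x ⬝ᵥ (1 - Mᴴ * M) *ᵥ x = star x ⬝ᵥ x - star (M *ᵥ x) ⬝ᵥ (M *ᵥ x) := by
  rw [sub_mulVec, dotProduct_sub, one_mulVec, ← mulVec_mulVec, dotProduct_mulVec,
    vecMul_conjTranspose, star_star]

lemma Con.mulVec_le {C : Matrix n n ℂ} (hC : Con C) (x : n → ℂ) :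
    ‖toE (C *ᵥ x)‖ ≤ ‖toE x‖ := by
  have h := PosSemidef.dotProduct_mulVec_nonneg hC x
  rw [quad_sub, dot_star_self_eq, dot_star_self_eq, ← Complex.ofReal_sub] at h
  rw [Complex.zero_le_real] at h
  have := sq_nonneg (‖toE x‖ - ‖toE (C *ᵥ x)‖)
  nlinarith [norm_nonneg (toE x), norm_nonneg (toE (C *ᵥ x))]

lemma Con.abs_dot_mulVec_le {C : Matrix n n ℂ} (hC : Con C) (y x : n → ℂ) :
    ‖star y ⬝ᵥ C *ᵥ x‖ ≤ ‖toE y‖ * ‖toE x‖ :=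
  (abs_dot_le y (C *ᵥ x)).trans
    (mul_le_mul_of_nonneg_left (hC.mulVec_le x) (norm_nonneg _))

lemma con_of_mulVec_le {C : Matrix n n ℂ} (hherm : (1 - Cᴴ * C).IsHermitian)
    (h : ∀ x, ‖toE (C *ᵥ x)‖ ≤ ‖toE x‖) : Con C := by
  refine PosSemidef.of_dotProduct_mulVec_nonneg hherm fun x => ?_
  rw [quad_sub, dot_star_self_eq, dot_star_self_eq, ← Complex.ofReal_sub,
    Complex.zero_le_real]
  have h1 := h x
  have h2 : (0:ℝ) ≤ ‖toE (C *ᵥ x)‖ := norm_nonneg _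
  nlinarith

lemma Con.mul {B C : Matrix n n ℂ} (hB : Con B) (hC : Con C) : Con (B * C) := by
  have key : 1 - (B * C)ᴴ * (B * C) = (1 - Cᴴ * C) + Cᴴ * (1 - Bᴴ * B) * C := by
    simp only [conjTranspose_mul, Matrix.mul_sub, Matrix.sub_mul, Matrix.mul_one,
      Matrix.one_mul]
    noncomm_ring
  rw [Con, key]
  exact hC.add (hB.conjTranspose_mul_mul_same C)

lemma con_conjTranspose_of {W : Matrix n n ℂ} (h : (1 - W * Wᴴ).PosSemidef) : Con Wᴴ := by
  rw [Con, conjTranspose_conjTranspose]; exact h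


lemma sum_mulVec' {ι : Type*} (s : Finset ι) (A : ι → Matrix n n ℂ) (x : n → ℂ) :
    (∑ i ∈ s, A i) *ᵥ x = ∑ i ∈ s, A i *ᵥ x :=
  map_sum (AddMonoidHom.mk' (fun M : Matrix n n ℂ => M *ᵥ x)
    (fun A B => Matrix.add_mulVec A B x)) A s

lemma dotProduct_sum' {ι : Type*} (s : Finset ι) (x : n → ℂ) (v : ι → n → ℂ) :
    x ⬝ᵥ (∑ i ∈ s, v i) = ∑ i ∈ s, x ⬝ᵥ v i :=
  map_sum (AddMonoidHom.mk' (fun w : n → ℂ => x ⬝ᵥ w)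
    (fun a b => dotProduct_add x a b)) v s

lemma dot_conj_sandwich (M C : Matrix n n ℂ) (y x : n → ℂ) :
    star y ⬝ᵥ (Mᴴ * C * M) *ᵥ x = star (M *ᵥ y) ⬝ᵥ C *ᵥ (M *ᵥ x) := by
  rw [← mulVec_mulVec, ← mulVec_mulVec,
    dotProduct_mulVec (star y) Mᴴ, vecMul_conjTranspose, star_star]

lemma dot_conj_self (M : Matrix n n ℂ) (x : n → ℂ) :
    star x ⬝ᵥ (Mᴴ * M) *ᵥ x = ((‖toE (M *ᵥ x)‖ ^ 2 : ℝ) : ℂ) := by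
  have h := dot_conj_sandwich M 1 x x
  rw [Matrix.mul_one, Matrix.one_mulVec] at h
  rw [h, dot_star_self_eq]

lemma norm_sq_sum_kraus {m : ℕ} (K : Fin m → Matrix n n ℂ)
    (hK : ∑ i, (K i)ᴴ * K i = 1) (x : n → ℂ) :
    ∑ i, ‖toE (K i *ᵥ x)‖ ^ 2 = ‖toE x‖ ^ 2 := by
  have h : ∀ i : Fin m, ((‖toE (K i *ᵥ x)‖ ^ 2 : ℝ) : ℂ)
      = star x ⬝ᵥ ((K i)ᴴ * K i) *ᵥ x := by
    intro i
    rw [dot_conj_self]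
  have key : ((∑ i, ‖toE (K i *ᵥ x)‖ ^ 2 : ℝ) : ℂ) = ((‖toE x‖ ^ 2 : ℝ) : ℂ) := by
    rw [Complex.ofReal_sum, Finset.sum_congr rfl (fun i _ => h i), ← dotProduct_sum',
      ← sum_mulVec', hK, one_mulVec, dot_star_self_eq]
  exact_mod_cast key

lemma kraus_con {m : ℕ} (K : Fin m → Matrix n n ℂ)
    (hK : ∑ i, (K i)ᴴ * K i = 1) {C : Matrix n n ℂ} (hC : Con C) :
    Con (∑ i, (K i)ᴴ * C * K i) := by
  set S : Matrix n n ℂ := ∑ i, (K i)ᴴ * C * K i with hS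
  have hb : ∀ y x : n → ℂ, ‖star y ⬝ᵥ S *ᵥ x‖ ≤ ‖toE y‖ * ‖toE x‖ := by
    intro y x
    have expand : star y ⬝ᵥ S *ᵥ x = ∑ i, star (K i *ᵥ y) ⬝ᵥ C *ᵥ (K i *ᵥ x) := by
      rw [hS, sum_mulVec', dotProduct_sum']
      exact Finset.sum_congr rfl fun i _ => dot_conj_sandwich (K i) C y x
    rw [expand]
    calc ‖∑ i, star (K i *ᵥ y) ⬝ᵥ C *ᵥ (K i *ᵥ x)‖
        ≤ ∑ i, ‖star (K i *ᵥ y) ⬝ᵥ C *ᵥ (K i *ᵥ x)‖ := norm_sum_le _ _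
      _ ≤ ∑ i, ‖toE (K i *ᵥ y)‖ * ‖toE (K i *ᵥ x)‖ :=
          Finset.sum_le_sum fun i _ => hC.abs_dot_mulVec_le _ _
      _ ≤ Real.sqrt (∑ i, ‖toE (K i *ᵥ y)‖ ^ 2) *
          Real.sqrt (∑ i, ‖toE (K i *ᵥ x)‖ ^ 2) :=
          Real.sum_mul_le_sqrt_mul_sqrt _ _ _
      _ = ‖toE y‖ * ‖toE x‖ := by
          rw [norm_sq_sum_kraus K hK, norm_sq_sum_kraus K hK,
            Real.sqrt_sq (norm_nonneg _), Real.sqrt_sq (norm_nonneg _)]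
  have hherm : (1 - Sᴴ * S).IsHermitian :=
    (isHermitian_one).sub (isHermitian_conjTranspose_mul_self S)
  refine con_of_mulVec_le hherm fun x => ?_
  have h2 : ‖toE (S *ᵥ x)‖ ^ 2 ≤ ‖toE (S *ᵥ x)‖ * ‖toE x‖ := by
    have := hb (S *ᵥ x) x
    have heq : star (S *ᵥ x) ⬝ᵥ S *ᵥ x = ((‖toE (S *ᵥ x)‖ ^ 2 : ℝ) : ℂ) :=
      dot_star_self_eq _
    rw [heq] at this
    rwa [Complex.norm_real, Real.norm_of_nonneg (by positivity)] at this
  rcases eq_or_lt_of_le (norm_nonneg (toE (S *ᵥ x))) with h0 | h0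
  · rw [← h0]; exact norm_nonneg _
  · nlinarith


/-- View a matrix as an element of Euclidean space. -/
noncomputable abbrev toM (X : Matrix n n ℂ) : EuclideanSpace ℂ (n × n) :=
  (WithLp.equiv 2 _).symm (fun p => X p.1 p.2)

lemma trace_conj_mul_eq_inner (X Y : Matrix n n ℂ) :
    (Xᴴ * Y).trace = inner ℂ (toM X) (toM Y) := by
  rw [EuclideanSpace.inner_eq_star_dotProduct]
  simp only [Matrix.trace, Matrix.diag, Matrix.mul_apply, Matrix.conjTranspose_apply,
    dotProduct, Pi.star_apply, WithLp.equiv_symm_apply, WithLp.ofLp_toLp]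
  rw [Fintype.sum_prod_type]
  rw [Finset.sum_comm]
  exact Finset.sum_congr rfl fun _ _ => Finset.sum_congr rfl fun _ _ => mul_comm _ _

lemma norm_toM_sq (X : Matrix n n ℂ) : ((‖toM X‖ ^ 2 : ℝ) : ℂ) = (Xᴴ * X).trace := by
  rw [trace_conj_mul_eq_inner, inner_self_eq_norm_sq_to_K]
  norm_cast

lemma trace_re_nonneg {M : Matrix n n ℂ} (hM : M.PosSemidef) : 0 ≤ M.trace.re := by
  have h : ∀ i, 0 ≤ (M i i).re := by
    intro i
    have h2 := hM.dotProduct_mulVec_nonneg (Pi.single i 1)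
    have h3 : star (Pi.single i 1 : n → ℂ) ⬝ᵥ M *ᵥ Pi.single i 1 = M i i := by
      simp [Matrix.mulVec_single, dotProduct, Pi.single_apply]
    rw [h3] at h2
    exact (Complex.le_def.mp h2).1
  rw [Matrix.trace, Complex.re_sum]
  exact Finset.sum_nonneg fun i _ => h i

lemma re_trace_con_mul_psd {B P : Matrix n n ℂ} (hB : Con B) (hP : P.PosSemidef) :
    ((B * P).trace).re ≤ P.trace.re := by
  set R := hP.sqrt with hRdef
  have hRR : R * R = P := hP.sqrt_mul_self
  have hRH : Rᴴ = R := hP.posSemidef_sqrt.1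
  have htr : (B * P).trace = inner ℂ (toM R) (toM (B * R)) := by
    rw [← trace_conj_mul_eq_inner, hRH, ← hRR, ← Matrix.mul_assoc,
      Matrix.trace_mul_comm R (B * R), Matrix.mul_assoc]
  have hnorm : ‖toM (B * R)‖ ≤ ‖toM R‖ := by
    have key : ((‖toM R‖ ^ 2 : ℝ) : ℂ) - ((‖toM (B * R)‖ ^ 2 : ℝ) : ℂ)
        = (Rᴴ * (1 - Bᴴ * B) * R).trace := by
      rw [norm_toM_sq, norm_toM_sq, ← Matrix.trace_sub]
      congr 1
      simp only [conjTranspose_mul, Matrix.mul_sub, Matrix.sub_mul, Matrix.mul_one,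
        Matrix.one_mul]
      noncomm_ring
    have hpsd := hB.conjTranspose_mul_mul_same R
    have h1 : 0 ≤ ((Rᴴ * (1 - Bᴴ * B) * R).trace).re := trace_re_nonneg hpsd
    have h2 : (((‖toM R‖ ^ 2 - ‖toM (B * R)‖ ^ 2 : ℝ)) : ℂ).re
        = ((Rᴴ * (1 - Bᴴ * B) * R).trace).re := by
      rw [Complex.ofReal_sub, key]
    rw [Complex.ofReal_re] at h2
    have h3 : ‖toM (B * R)‖ ^ 2 ≤ ‖toM R‖ ^ 2 := by linarith
    have := norm_nonneg (toM R)
    nlinarith [norm_nonneg (toM (B * R))]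
  have hre : ((B * P).trace).re ≤ ‖toM R‖ * ‖toM (B * R)‖ := by
    rw [htr]
    exact re_inner_le_norm (𝕜 := ℂ) _ _
  have hP2 : P.trace.re = ‖toM R‖ ^ 2 := by
    have := norm_toM_sq R
    rw [hRH, hRR] at this
    have h4 := congrArg Complex.re this
    rw [Complex.ofReal_re] at h4
    exact h4.symm
  rw [hP2]
  nlinarith [norm_nonneg (toM R), norm_nonneg (toM (B * R))]


lemma exists_polar (A : Matrix n n ℂ) :
    ∃ W : Matrix n n ℂ,
      W * (posSemidef_conjTranspose_mul_self A).sqrt = A ∧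
      Wᴴ * A = (posSemidef_conjTranspose_mul_self A).sqrt ∧
      (1 - Wᴴ * W).PosSemidef ∧ (1 - W * Wᴴ).PosSemidef := by
  have hA : (Aᴴ * A).PosSemidef := posSemidef_conjTranspose_mul_self A
  have h : (Aᴴ * A).IsHermitian := isHermitian_conjTranspose_mul_self A
  set V : Matrix n n ℂ := (h.eigenvectorUnitary : Matrix n n ℂ) with hVdef
  set lam : n → ℝ := h.eigenvalues with hlamdef
  have hlam : ∀ i, 0 ≤ lam i := fun i => hA.eigenvalues_nonneg i
  have hVV : star V * V = 1 := mem_unitaryGroup_iff'.mp h.eigenvectorUnitary.2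
  have hVV' : V * star V = 1 := mem_unitaryGroup_iff.mp h.eigenvectorUnitary.2
  set e : n → ℂ := fun i => ((Real.sqrt (lam i))⁻¹ : ℝ) with hedef
  set s : n → ℂ := fun i => ((Real.sqrt (lam i)) : ℝ) with hsdef
  set q : n → ℂ := fun i => if lam i = 0 then 0 else 1 with hqdef
  have hsqrt : (posSemidef_conjTranspose_mul_self A).sqrt = V * diagonal s * star V := rfl
  have hspec : Aᴴ * A = V * diagonal (fun i => ((lam i : ℝ) : ℂ)) * star V :=
    spectral_aux h
  -- algebra helper
  have hconj : ∀ f g : n → ℂ, (V * diagonal f * star V) * (V * diagonal g * star V)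
      = V * diagonal (fun i => f i * g i) * star V := by
    intro f g
    have h1 : (V * diagonal f * star V) * (V * diagonal g * star V)
        = V * (diagonal f * (star V * V) * diagonal g) * star V := by
      simp only [Matrix.mul_assoc]
    rw [h1, hVV, Matrix.mul_one, diagonal_mul_diagonal]
  -- columns with zero eigenvalue are killed by A
  have hAVcol : ∀ i j, lam j = 0 → (A * V) i j = 0 := by
    intro i j hj
    have h1 : (Aᴴ * A) *ᵥ ⇑(h.eigenvectorBasis j) = 0 := by
      rw [h.mulVec_eigenvectorBasis, ← hlamdef, hj]
      simp
    have h2 : star ⇑(h.eigenvectorBasis j) ⬝ᵥ (Aᴴ * A) *ᵥ ⇑(h.eigenvectorBasis j) = 0 := by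
      rw [h1, dotProduct_zero]
    rw [dot_conj_self] at h2
    have h3 : ‖toE (A *ᵥ ⇑(h.eigenvectorBasis j))‖ = 0 := by
      have := Complex.ofReal_eq_zero.mp h2
      nlinarith [norm_nonneg (toE (A *ᵥ ⇑(h.eigenvectorBasis j)))]
    have h4 : A *ᵥ ⇑(h.eigenvectorBasis j) = 0 :=
      (WithLp.equiv 2 (n → ℂ)).symm.injective (norm_eq_zero.mp h3)
    have h5 : (A * V) i j = (A *ᵥ ⇑(h.eigenvectorBasis j)) i := by
      simp [Matrix.mul_apply, Matrix.mulVec, dotProduct, hVdef,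
        IsHermitian.eigenvectorUnitary_apply]
    rw [h5, h4]
    simp
  have hmod : ∀ f g : n → ℂ, (∀ j, lam j ≠ 0 → f j = g j) →
      A * V * diagonal f = A * V * diagonal g := by
    intro f g hfg
    ext i j
    rw [Matrix.mul_diagonal, Matrix.mul_diagonal]
    by_cases hj : lam j = 0
    · rw [hAVcol i j hj, zero_mul, zero_mul]
    · rw [hfg j hj]
  set X : Matrix n n ℂ := V * diagonal e * star V with hXdef
  have hse : star e = e := by
    funext i
    simp [hedef, Complex.conj_ofReal]
  have hXH : Xᴴ = X := by
    rw [hXdef, conjTranspose_mul, conjTranspose_mul, diagonal_conjTranspose, hse]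
    simp only [← star_eq_conjTranspose, star_star, Matrix.mul_assoc]
  have hes : (fun i => e i * (((lam i : ℝ) : ℂ) * e i)) = q := by
    funext i
    by_cases hi : lam i = 0
    · simp [hedef, hqdef, hi]
    · have h0 : 0 < lam i := lt_of_le_of_ne (hlam i) (Ne.symm hi)
      have hs0 : Real.sqrt (lam i) ≠ 0 := Real.sqrt_ne_zero'.mpr h0
      simp only [hedef, hqdef, if_neg hi]
      rw [← Complex.ofReal_mul, ← Complex.ofReal_mul, Complex.ofReal_eq_one]
      field_simp
      exact (Real.sq_sqrt (hlam i)).symm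
  have helam : (fun i => e i * ((lam i : ℝ) : ℂ)) = s := by
    funext i
    by_cases hi : lam i = 0
    · simp [hedef, hsdef, hi, Real.sqrt_zero]
    · have h0 : 0 < lam i := lt_of_le_of_ne (hlam i) (Ne.symm hi)
      have hs0 : Real.sqrt (lam i) ≠ 0 := Real.sqrt_ne_zero'.mpr h0
      simp only [hedef, hsdef]
      rw [← Complex.ofReal_mul, Complex.ofReal_inj]
      field_simp
      exact (Real.sq_sqrt (hlam i)).symm
  refine ⟨A * X, ?_, ?_, ?_, ?_⟩
  · -- W * sqrt = A
    rw [hsqrt, hXdef, Matrix.mul_assoc A, hconj, ← Matrix.mul_assoc A,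
      ← Matrix.mul_assoc A]
    have := hmod (fun i => e i * s i) (fun _ => 1) (by
      intro j hj
      have hs0 : Real.sqrt (lam j) ≠ 0 := by
        rw [Real.sqrt_ne_zero']
        exact lt_of_le_of_ne (hlam j) (Ne.symm hj)
      simp only [hedef, hsdef]
      rw [← Complex.ofReal_mul, inv_mul_cancel₀ hs0, Complex.ofReal_one])
    rw [this, diagonal_one, Matrix.mul_one, Matrix.mul_assoc, hVV', Matrix.mul_one]
  · -- Wᴴ * A = sqrt
    have hWH : (A * X)ᴴ = X * Aᴴ := by rw [conjTranspose_mul, hXH]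
    rw [hsqrt, hWH, Matrix.mul_assoc, hspec, hXdef, hconj, helam]
  · -- 1 - Wᴴ W psd
    have hWH : (A * X)ᴴ = X * Aᴴ := by rw [conjTranspose_mul, hXH]
    have hWW : (A * X)ᴴ * (A * X) = V * diagonal q * star V := by
      rw [hWH, Matrix.mul_assoc X, ← Matrix.mul_assoc Aᴴ, hspec, hXdef,
        hconj, hconj, hes]
    rw [hWW]
    have h1 : 1 - V * diagonal q * star V = V * diagonal (fun i => 1 - q i) * star V := by
      have : diagonal (fun i => (1:ℂ) - q i) = 1 - diagonal q := by
        rw [← diagonal_one, diagonal_sub]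
      rw [this, Matrix.mul_sub, Matrix.sub_mul, Matrix.mul_one, hVV']
    rw [h1]
    have h2 : (diagonal (fun i => (1:ℂ) - q i)).PosSemidef := by
      refine posSemidef_diagonal_iff.mpr fun i => ?_
      simp only [hqdef]
      by_cases hi : lam i = 0 <;> simp [hi]
    have h3 := h2.mul_mul_conjTranspose_same V
    rwa [← star_eq_conjTranspose] at h3
  · -- 1 - W Wᴴ psd
    have hWH : (A * X)ᴴ = X * Aᴴ := by rw [conjTranspose_mul, hXH]
    have hWW : (A * X)ᴴ * (A * X) = V * diagonal q * star V := by
      rw [hWH, Matrix.mul_assoc X, ← Matrix.mul_assoc Aᴴ, hspec, hXdef,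
        hconj, hconj, hes]
    set W : Matrix n n ℂ := A * X with hWdef
    have hWq : W * (V * diagonal q * star V) = W := by
      rw [hWdef, hXdef, Matrix.mul_assoc A, hconj]
      have : (fun i => e i * q i) = e := by
        funext i
        simp only [hedef, hqdef]
        by_cases hi : lam i = 0
        · simp [hi]
        · simp [hi]
      rw [this]
    set P : Matrix n n ℂ := W * Wᴴ with hPdef
    have hPH : Pᴴ = P := (isHermitian_mul_conjTranspose_self W)
    have hidem : P * P = P := by
      rw [hPdef]
      calc W * Wᴴ * (W * Wᴴ) = W * (Wᴴ * W) * Wᴴ := by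
            simp only [Matrix.mul_assoc]
        _ = W * (V * diagonal q * star V) * Wᴴ := by rw [hWW]
        _ = W * Wᴴ := by rw [hWq]
    have hct : (1 - P)ᴴ = 1 - P := by
      rw [conjTranspose_sub, conjTranspose_one, hPH]
    have hkey : (1 - P)ᴴ * (1 - P) = 1 - P := by
      rw [hct]
      have hexp : (1 - P) * (1 - P) = 1 - P - (P - P * P) := by noncomm_ring
      rw [hexp, hidem, sub_self, sub_zero]
    rw [← hkey]
    exact posSemidef_conjTranspose_mul_self _

end TraceNormAux


open TraceNormAux

/-- A quantum channel `M(X) = ∑ i, Kᵢ X Kᵢᴴ` with `∑ i, Kᵢᴴ Kᵢ = 1` is a contraction for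
the trace norm: `‖M(X)‖₁ ≤ ‖X‖₁` for every matrix `X`. -/
theorem traceNorm_channel_le {d m : ℕ} (K : Fin m → Matrix (Fin d) (Fin d) ℂ)
    (hK : ∑ i, (K i)ᴴ * K i = 1)
    (X : Matrix (Fin d) (Fin d) ℂ) :
    traceNorm (∑ i, K i * X * (K i)ᴴ) ≤ traceNorm X := by
  set A : Matrix (Fin d) (Fin d) ℂ := ∑ i, K i * X * (K i)ᴴ with hAdef
  obtain ⟨W, hW1, hW2, hW3, hW4⟩ := exists_polar A
  obtain ⟨U, hU1, hU2, hU3, hU4⟩ := exists_polar X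
  have hTA : traceNorm A = ((Wᴴ * A).trace).re := by
    unfold traceNorm
    rw [hW2]
    rfl
  set S : Matrix (Fin d) (Fin d) ℂ := ∑ i, (K i)ᴴ * Wᴴ * K i with hSdef
  have htr : (Wᴴ * A).trace = (S * X).trace := by
    rw [hAdef, Finset.mul_sum, trace_sum, hSdef, Finset.sum_mul, trace_sum]
    refine Finset.sum_congr rfl fun i _ => ?_
    have e1 : Wᴴ * (K i * X * (K i)ᴴ) = Wᴴ * K i * X * (K i)ᴴ := by
      simp only [Matrix.mul_assoc]
    have e2 : (K i)ᴴ * (Wᴴ * K i * X) = (K i)ᴴ * Wᴴ * K i * X := by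
      simp only [Matrix.mul_assoc]
    rw [e1, Matrix.trace_mul_comm, e2]
  have hConW : Con Wᴴ := con_conjTranspose_of hW4
  have hConS : Con S := kraus_con K hK hConW
  have hConU : Con U := hU3
  have hfin : (S * X).trace = ((S * U) * (Matrix.posSemidef_conjTranspose_mul_self X).sqrt).trace := by
    conv_lhs => rw [← hU1, ← Matrix.mul_assoc]
  have hle : (((S * U) * (Matrix.posSemidef_conjTranspose_mul_self X).sqrt).trace).re
      ≤ (((Matrix.posSemidef_conjTranspose_mul_self X).sqrt).trace).re :=
    re_trace_con_mul_psd (hConS.mul hConU)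
      (Matrix.posSemidef_conjTranspose_mul_self X).posSemidef_sqrt
  calc traceNorm A = ((Wᴴ * A).trace).re := hTA
    _ = (((S * U) * (Matrix.posSemidef_conjTranspose_mul_self X).sqrt).trace).re := by
        rw [htr, hfin]
    _ ≤ (((Matrix.posSemidef_conjTranspose_mul_self X).sqrt).trace).re := hle
    _ = traceNorm X := rfl
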